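/- Let r : Finset [n] → ℕ be the rank function of a binary matroid given by a linear code C (r(S) = rank of columns indexed by S of a generating matrix), let 0 ≤ p ≤ 1 and t = p^{1/(2 ln 2)}. Then log₂ E_{S ∼ p} 2^{|S| - r(S)} ≤ E_{T ∼ t} (|T| - r(T)). -/

import Mathlib

open Finset

/-- Rank of the column submatrix of `G` indexed by `T`. -/
noncomputable def colRank {n k : ℕ} (G : Fin k → Fin n → ZMod 2) (T : Finset (Fin n)) : ℕ :=
  Module.finrank (ZMod 2)
    (Submodule.span (ZMod 2) ((fun j => fun i => G i j) '' (T : Set (Fin n))))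


noncomputable def cExp : ℝ := 1 / (2 * Real.log 2)

lemma log2_pos : 0 < Real.log 2 := Real.log_pos (by norm_num)

lemma cExp_pos : 0 < cExp := by unfold cExp; positivity

lemma lem1 {s : ℝ} (h0 : 0 ≤ s) (h1 : s ≤ 1) :
    (1 + s) * Real.log (1 + s) ≤ 2 * Real.log 2 * s := by
  have h := Real.convexOn_mul_log.2 (Set.mem_Ici.2 (by norm_num : (0:ℝ) ≤ 1))
      (Set.mem_Ici.2 (by norm_num : (0:ℝ) ≤ 2)) (by linarith : (0:ℝ) ≤ 1 - s) h0 (by ring)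
  simp only [smul_eq_mul, Real.log_one] at h
  have e : (1 - s) * 1 + s * 2 = 1 + s := by ring
  rw [e] at h
  calc (1 + s) * Real.log (1 + s) ≤ (1-s) * (1 * 0) + s * (2 * Real.log 2) := h
    _ = 2 * Real.log 2 * s := by ring

lemma lem1' {s : ℝ} (h0 : 0 ≤ s) (h1 : s ≤ 1) :
    cExp * Real.log (1 + s) ≤ s / (1 + s) := by
  have h2 := log2_pos
  have hs1 : (0:ℝ) < 1 + s := by linarith
  have h : Real.log (1+s) / (2*Real.log 2) ≤ s / (1+s) := by
    rw [div_le_div_iff₀ (by positivity) hs1]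
    nlinarith [lem1 h0 h1]
  calc cExp * Real.log (1+s) = Real.log (1+s) / (2*Real.log 2) := by
        unfold cExp; ring
    _ ≤ s / (1+s) := h






lemma scalar {p z : ℝ} (hp0 : 0 ≤ p) (hp1 : p ≤ 1) (hz0 : 0 ≤ z) (hz1 : z ≤ 1) :
    Real.log (1 + p * z) ≤ p ^ cExp * Real.log (1 + z) := by
  rcases eq_or_lt_of_le hp0 with h | hp
  · rw [← h, Real.zero_rpow cExp_pos.ne', zero_mul, zero_mul, add_zero, Real.log_one]
  set c := cExp with hc
  set g : ℝ → ℝ := fun x => x ^ (-c) * Real.log (1 + x * z) with hg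
  have hder : ∀ x : ℝ, 0 < x → x ≤ 1 →
      HasDerivAt g (-c * x ^ (-c - 1) * Real.log (1 + x * z)
        + x ^ (-c) * (z / (1 + x * z))) x := by
    intro x hx0 hx1
    have hxz : (0:ℝ) < 1 + x * z := by nlinarith
    have h1 : HasDerivAt (fun x : ℝ => x ^ (-c)) (-c * x ^ (-c - 1)) x :=
      Real.hasDerivAt_rpow_const (Or.inl hx0.ne')
    have h2 : HasDerivAt (fun x : ℝ => 1 + x * z) z x := by
      simpa using ((hasDerivAt_id x).mul_const z).const_add 1
    have h3 : HasDerivAt (fun x : ℝ => Real.log (1 + x * z)) (z / (1 + x * z)) x :=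
      HasDerivAt.log h2 hxz.ne'
    exact h1.mul h3
  have hderiv_nonneg : ∀ x : ℝ, 0 < x → x ≤ 1 →
      0 ≤ -c * x ^ (-c - 1) * Real.log (1 + x * z) + x ^ (-c) * (z / (1 + x * z)) := by
    intro x hx0 hx1
    have hs0 : 0 ≤ x * z := by positivity
    have hs1 : x * z ≤ 1 := by nlinarith
    have hxz : (0:ℝ) < 1 + x * z := by nlinarith
    have hkey := lem1' hs0 hs1
    have hsplit : x ^ (-c) = x ^ (-c - 1) * x := by
      rw [← Real.rpow_add_one hx0.ne' (-c - 1)]; ring_nf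
    have hrw : -c * x ^ (-c - 1) * Real.log (1 + x * z) + x ^ (-c) * (z / (1 + x * z))
        = x ^ (-c - 1) * ((x * z) / (1 + x * z) - c * Real.log (1 + x * z)) := by
      rw [hsplit]; field_simp; ring
    rw [hrw]
    exact mul_nonneg (Real.rpow_nonneg hx0.le _) (by linarith)
  have hmono : MonotoneOn g (Set.Icc p 1) := by
    apply monotoneOn_of_deriv_nonneg (convex_Icc p 1)
    · intro x hx
      exact (hder x (lt_of_lt_of_le hp hx.1) hx.2).continuousAt.continuousWithinAt
    · intro x hx
      rw [interior_Icc] at hx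
      exact (hder x (lt_trans hp hx.1) hx.2.le).differentiableAt.differentiableWithinAt
    · intro x hx
      rw [interior_Icc] at hx
      rw [(hder x (lt_trans hp hx.1) hx.2.le).deriv]
      exact hderiv_nonneg x (lt_trans hp hx.1) hx.2.le
  have h := hmono (Set.mem_Icc.2 ⟨le_refl p, hp1⟩) (Set.mem_Icc.2 ⟨hp1, le_refl 1⟩) hp1
  have hg1 : g 1 = Real.log (1 + z) := by
    simp [hg, Real.one_rpow]
  have hgp : g p = p ^ (-c) * Real.log (1 + p * z) := rfl
  rw [hg1, hgp] at h
  have hinv : p ^ c * p ^ (-c) = 1 := by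
    rw [← Real.rpow_add hp]; simp
  calc Real.log (1 + p * z) = p ^ c * (p ^ (-c) * Real.log (1 + p * z)) := by
        rw [← mul_assoc, hinv, one_mul]
    _ ≤ p ^ c * Real.log (1 + z) :=
        mul_le_mul_of_nonneg_left h (Real.rpow_nonneg hp0 c)





lemma key {A B p t : ℝ} (hA : 1 ≤ A) (hAB : A ≤ B) (hB : B ≤ 2 * A)
    (hp0 : 0 ≤ p) (hp1 : p ≤ 1) (ht : t = p ^ cExp) :
    Real.logb 2 ((1 - p) * A + p * B) ≤ (1 - t) * Real.logb 2 A + t * Real.logb 2 B := by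
  have hA0 : (0:ℝ) < A := lt_of_lt_of_le one_pos hA
  set z : ℝ := B / A - 1 with hzdef
  have hz0 : 0 ≤ z := by
    rw [hzdef, sub_nonneg, le_div_iff₀ hA0, one_mul]; exact hAB
  have hz1 : z ≤ 1 := by
    rw [hzdef, sub_le_iff_le_add, div_le_iff₀ hA0]; linarith
  have hBz : B = A * (1 + z) := by
    rw [hzdef]; field_simp; ring
  have hpz0 : (0:ℝ) < 1 + p * z := by nlinarith
  have hz0' : (0:ℝ) < 1 + z := by linarith
  have hsum : (1 - p) * A + p * B = A * (1 + p * z) := by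
    rw [hBz]; ring
  rw [hsum, Real.logb_mul hA0.ne' hpz0.ne', hBz, Real.logb_mul hA0.ne' hz0'.ne']
  have hscal : Real.logb 2 (1 + p * z) ≤ t * Real.logb 2 (1 + z) := by
    rw [ht]
    unfold Real.logb
    rw [div_le_iff₀ log2_pos] at *
    calc Real.log (1 + p * z) ≤ p ^ cExp * Real.log (1 + z) := scalar hp0 hp1 hz0 hz1
      _ = p ^ cExp * (Real.log (1 + z) / Real.log 2) * Real.log 2 := by
          field_simp
  nlinarith [hscal]



lemma sum_weights {ι : Type*} [DecidableEq ι] (p : ℝ) (s : Finset ι) :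
    ∑ S ∈ s.powerset, p ^ S.card * (1 - p) ^ (s.card - S.card) = 1 := by
  induction s using Finset.induction_on with
  | empty => simp
  | @insert a s ha ih =>
    rw [Finset.sum_powerset_insert ha]
    have hcard : (insert a s).card = s.card + 1 := Finset.card_insert_of_notMem ha
    have e1 : ∑ S ∈ s.powerset, p ^ S.card * (1 - p) ^ ((insert a s).card - S.card)
        = (1 - p) * ∑ S ∈ s.powerset, p ^ S.card * (1 - p) ^ (s.card - S.card) := by
      rw [Finset.mul_sum]
      apply Finset.sum_congr rfl
      intro S hS
      have hle : S.card ≤ s.card := Finset.card_le_card (Finset.mem_powerset.mp hS)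
      rw [hcard, Nat.succ_sub hle, pow_succ]
      ring
    have e2 : ∑ S ∈ s.powerset, p ^ (insert a S).card * (1 - p) ^ ((insert a s).card - (insert a S).card)
        = p * ∑ S ∈ s.powerset, p ^ S.card * (1 - p) ^ (s.card - S.card) := by
      rw [Finset.mul_sum]
      apply Finset.sum_congr rfl
      intro S hS
      have haS : a ∉ S := fun h => ha (Finset.mem_powerset.mp hS h)
      rw [Finset.card_insert_of_notMem haS, hcard, Nat.succ_sub_succ, pow_succ]
      ring
    rw [e1, e2, ih]
    ring

lemma rankLeCard' {ι : Type*} [DecidableEq ι] (r : Finset ι → ℝ)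
    (h0 : r ∅ = 0) (h2 : ∀ S e, r (insert e S) ≤ r S + 1) :
    ∀ S : Finset ι, r S ≤ S.card := by
  intro S
  induction S using Finset.induction_on with
  | empty => simp [h0]
  | @insert e S he ih =>
    have := h2 S e
    rw [Finset.card_insert_of_notMem he]
    push_cast
    linarith

lemma one_le_F {ι : Type*} [DecidableEq ι] (s : Finset ι) (r : Finset ι → ℝ)
    (hrc : ∀ S : Finset ι, r S ≤ S.card) (p : ℝ) (hp0 : 0 ≤ p) (hp1 : p ≤ 1) :
    1 ≤ ∑ S ∈ s.powerset, p ^ S.card * (1 - p) ^ (s.card - S.card)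
        * 2 ^ ((S.card : ℝ) - r S) := by
  have hq : (0:ℝ) ≤ 1 - p := by linarith
  calc (1:ℝ) = ∑ S ∈ s.powerset, p ^ S.card * (1 - p) ^ (s.card - S.card) :=
        (sum_weights p s).symm
    _ ≤ _ := ?_
  apply Finset.sum_le_sum
  intro S hS
  have hW : 0 ≤ p ^ S.card * (1 - p) ^ (s.card - S.card) :=
    mul_nonneg (pow_nonneg hp0 _) (pow_nonneg hq _)
  have h2 : 1 ≤ (2:ℝ) ^ ((S.card : ℝ) - r S) :=
    Real.one_le_rpow (by norm_num) (by linarith [hrc S])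
  exact le_mul_of_one_le_right hW h2



lemma abstract_bound {ι : Type*} [DecidableEq ι] (U : Finset ι) (r : Finset ι → ℝ)
    (h0 : r ∅ = 0)
    (h1 : ∀ S e, r S ≤ r (insert e S))
    (h2 : ∀ S e, r (insert e S) ≤ r S + 1)
    (h3 : ∀ S T e, S ⊆ T → r (insert e T) + r S ≤ r T + r (insert e S))
    (p t : ℝ) (hp0 : 0 ≤ p) (hp1 : p ≤ 1) (ht : t = p ^ cExp) :
    Real.logb 2 (∑ S ∈ U.powerset,
        p ^ S.card * (1 - p) ^ (U.card - S.card) * 2 ^ ((S.card : ℝ) - r S))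
      ≤ ∑ T ∈ U.powerset,
        t ^ T.card * (1 - t) ^ (U.card - T.card) * ((T.card : ℝ) - r T) := by
  have ht0 : 0 ≤ t := ht ▸ Real.rpow_nonneg hp0 _
  have ht1 : t ≤ 1 := ht ▸ Real.rpow_le_one hp0 hp1 cExp_pos.le
  induction U using Finset.induction_on generalizing r with
  | empty => simp [h0]
  | @insert a s ha ih =>
    -- contraction rank function
    set r' : Finset ι → ℝ := fun S => r (insert a S) - r {a} with hr'
    have hra : ({a} : Finset ι) = insert a ∅ := rfl
    have h0' : r' ∅ = 0 := by simp [hr']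
    have h1' : ∀ S e, r' S ≤ r' (insert e S) := by
      intro S e
      simp only [hr']
      have := h1 (insert a S) e
      rw [Finset.insert_comm e a S] at this
      linarith
    have h2' : ∀ S e, r' (insert e S) ≤ r' S + 1 := by
      intro S e
      simp only [hr']
      have := h2 (insert a S) e
      rw [Finset.insert_comm e a S] at this
      linarith
    have h3' : ∀ S T e, S ⊆ T → r' (insert e T) + r' S ≤ r' T + r' (insert e S) := by
      intro S T e hST
      simp only [hr']
      have := h3 (insert a S) (insert a T) e (Finset.insert_subset_insert a hST)
      rw [Finset.insert_comm e a S, Finset.insert_comm e a T] at this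
      linarith
    have hra0 : 0 ≤ r {a} := by
      have := h1 ∅ a; rw [h0] at this; rwa [hra]
    have hra1 : r {a} ≤ 1 := by
      have := h2 ∅ a; rw [h0] at this; rw [hra]; linarith
    have hcard : (insert a s).card = s.card + 1 := Finset.card_insert_of_notMem ha
    -- abbreviations
    set A : ℝ := ∑ S ∈ s.powerset,
        p ^ S.card * (1 - p) ^ (s.card - S.card) * 2 ^ ((S.card : ℝ) - r S) with hA
    set B' : ℝ := ∑ S ∈ s.powerset,
        p ^ S.card * (1 - p) ^ (s.card - S.card) * 2 ^ ((S.card : ℝ) - r' S) with hB'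
    set B : ℝ := ∑ S ∈ s.powerset,
        p ^ S.card * (1 - p) ^ (s.card - S.card)
          * 2 ^ (((S.card : ℝ) + 1) - r (insert a S)) with hB
    have hBB' : B = 2 ^ ((1:ℝ) - r {a}) * B' := by
      rw [hB, hB', Finset.mul_sum]
      apply Finset.sum_congr rfl
      intro S hS
      rw [show ((S.card : ℝ) + 1) - r (insert a S)
          = ((1:ℝ) - r {a}) + ((S.card : ℝ) - r' S) by simp [hr']; ring,
        Real.rpow_add two_pos]
      ring
    -- decompose LHS sum
    have hLHS : ∑ S ∈ (insert a s).powerset,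
        p ^ S.card * (1 - p) ^ ((insert a s).card - S.card) * 2 ^ ((S.card : ℝ) - r S)
        = (1 - p) * A + p * B := by
      rw [Finset.sum_powerset_insert ha]
      congr 1
      · rw [hA, Finset.mul_sum]
        apply Finset.sum_congr rfl
        intro S hS
        have hle : S.card ≤ s.card := Finset.card_le_card (Finset.mem_powerset.mp hS)
        rw [hcard, Nat.succ_sub hle, pow_succ]
        ring
      · rw [hB, Finset.mul_sum]
        apply Finset.sum_congr rfl
        intro S hS
        have haS : a ∉ S := fun h => ha (Finset.mem_powerset.mp hS h)
        rw [Finset.card_insert_of_notMem haS, hcard, Nat.succ_sub_succ, pow_succ]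
        push_cast
        ring
    -- decompose RHS sum
    have hRHS : ∑ T ∈ (insert a s).powerset,
        t ^ T.card * (1 - t) ^ ((insert a s).card - T.card) * ((T.card : ℝ) - r T)
        = (1 - t) * (∑ T ∈ s.powerset,
            t ^ T.card * (1 - t) ^ (s.card - T.card) * ((T.card : ℝ) - r T))
          + t * ((∑ T ∈ s.powerset,
            t ^ T.card * (1 - t) ^ (s.card - T.card) * ((T.card : ℝ) - r' T))
            + (1 - r {a})) := by
      rw [Finset.sum_powerset_insert ha]
      congr 1
      · rw [Finset.mul_sum]
        apply Finset.sum_congr rfl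
        intro S hS
        have hle : S.card ≤ s.card := Finset.card_le_card (Finset.mem_powerset.mp hS)
        rw [hcard, Nat.succ_sub hle, pow_succ]
        ring
      · have step : ∀ S ∈ s.powerset,
            t ^ (insert a S).card * (1 - t) ^ ((insert a s).card - (insert a S).card)
              * (((insert a S).card : ℝ) - r (insert a S))
            = t * (t ^ S.card * (1 - t) ^ (s.card - S.card) * ((S.card : ℝ) - r' S)
                + (1 - r {a}) * (t ^ S.card * (1 - t) ^ (s.card - S.card))) := by
          intro S hS
          have haS : a ∉ S := fun h => ha (Finset.mem_powerset.mp hS h)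
          rw [Finset.card_insert_of_notMem haS, hcard, Nat.succ_sub_succ, pow_succ]
          simp only [hr']
          push_cast
          ring
        rw [Finset.sum_congr rfl step, ← Finset.mul_sum, Finset.sum_add_distrib,
          ← Finset.mul_sum, sum_weights t s, mul_one]
    -- bounds
    have hrc : ∀ S : Finset ι, r S ≤ S.card := rankLeCard' r h0 h2
    have hrc' : ∀ S : Finset ι, r' S ≤ S.card := rankLeCard' r' h0' h2'
    have hA1 : 1 ≤ A := one_le_F s r hrc p hp0 hp1
    have hB'1 : 1 ≤ B' := one_le_F s r' hrc' p hp0 hp1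
    have hwnn : ∀ S : Finset ι, 0 ≤ p ^ S.card * (1 - p) ^ (s.card - S.card) := by
      intro S
      exact mul_nonneg (pow_nonneg hp0 _) (pow_nonneg (by linarith) _)
    have hAB : A ≤ B := by
      rw [hA, hB]
      apply Finset.sum_le_sum
      intro S hS
      apply mul_le_mul_of_nonneg_left _ (hwnn S)
      rw [Real.rpow_le_rpow_left_iff one_lt_two]
      have := h2 S a
      linarith
    have hB2A : B ≤ 2 * A := by
      rw [hA, hB, Finset.mul_sum]
      apply Finset.sum_le_sum
      intro S hS
      rw [show (2:ℝ) * (p ^ S.card * (1 - p) ^ (s.card - S.card) * 2 ^ ((S.card : ℝ) - r S))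
          = p ^ S.card * (1 - p) ^ (s.card - S.card) * 2 ^ (((S.card : ℝ) - r S) + 1) by
            rw [Real.rpow_add_one two_ne_zero]; ring]
      apply mul_le_mul_of_nonneg_left _ (hwnn S)
      rw [Real.rpow_le_rpow_left_iff one_lt_two]
      have := h1 S a
      linarith
    -- combine
    rw [hLHS, hRHS]
    have hkey := key hA1 hAB hB2A hp0 hp1 ht
    have hihA := ih r h0 h1 h2 h3
    have hihB := ih r' h0' h1' h2' h3'
    have hlogB : Real.logb 2 B = (1 - r {a}) + Real.logb 2 B' := by
      rw [hBB', Real.logb_mul (by positivity) (by linarith), Real.logb_rpow two_pos (by norm_num)]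
    have e1 : (1 - t) * Real.logb 2 A ≤ (1 - t) * ∑ T ∈ s.powerset,
        t ^ T.card * (1 - t) ^ (s.card - T.card) * ((T.card : ℝ) - r T) :=
      mul_le_mul_of_nonneg_left hihA (by linarith)
    have e2 : t * Real.logb 2 B ≤ t * ((∑ T ∈ s.powerset,
        t ^ T.card * (1 - t) ^ (s.card - T.card) * ((T.card : ℝ) - r' T)) + (1 - r {a})) := by
      apply mul_le_mul_of_nonneg_left _ ht0
      rw [hlogB]
      linarith
    linarith



variable {n k : ℕ} (G : Fin k → Fin n → ZMod 2)

lemma colRank_empty : colRank G ∅ = 0 := by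
  simp [colRank]

lemma colRank_insert_img (e : Fin n) (S : Finset (Fin n)) :
    colRank G (insert e S) = Module.finrank (ZMod 2)
      (Submodule.span (ZMod 2)
        (insert (fun i => G i e) ((fun j => fun i => G i j) '' (S : Set (Fin n))))) := by
  rw [colRank, Finset.coe_insert, Set.image_insert_eq]

lemma colRank_mono (S : Finset (Fin n)) (e : Fin n) :
    colRank G S ≤ colRank G (insert e S) := by
  rw [colRank_insert_img]
  apply Submodule.finrank_mono
  apply Submodule.span_mono
  exact Set.subset_insert _ _

lemma colRank_insert_le (S : Finset (Fin n)) (e : Fin n) :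
    colRank G (insert e S) ≤ colRank G S + 1 := by
  rw [colRank_insert_img]
  set v : Fin k → ZMod 2 := fun i => G i e
  set s : Set (Fin k → ZMod 2) := (fun j => fun i => G i j) '' (S : Set (Fin n))
  rw [Submodule.span_insert]
  have h := Submodule.finrank_sup_add_finrank_inf_eq
    (Submodule.span (ZMod 2) {v}) (Submodule.span (ZMod 2) s)
  have hs : Module.finrank (ZMod 2) (Submodule.span (ZMod 2) ({v} : Set (Fin k → ZMod 2))) ≤ 1 := by
    rcases eq_or_ne v 0 with h | h
    · rw [h, Submodule.span_zero_singleton]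
      simp
    · rw [show Submodule.span (ZMod 2) ({v} : Set (Fin k → ZMod 2)) = (ZMod 2) ∙ v from rfl,
        finrank_span_singleton h]
  have hd : colRank G S = Module.finrank (ZMod 2) (Submodule.span (ZMod 2) s) := rfl
  omega

lemma colRank_submodular (S T : Finset (Fin n)) (e : Fin n) (hST : S ⊆ T) :
    colRank G (insert e T) + colRank G S ≤ colRank G T + colRank G (insert e S) := by
  set v : Fin k → ZMod 2 := fun i => G i e with hv
  set sS : Set (Fin k → ZMod 2) := (fun j => fun i => G i j) '' (S : Set (Fin n)) with hsS
  set sT : Set (Fin k → ZMod 2) := (fun j => fun i => G i j) '' (T : Set (Fin n)) with hsT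
  by_cases hmem : v ∈ Submodule.span (ZMod 2) sS
  · have hvT : v ∈ Submodule.span (ZMod 2) sT :=
      Submodule.span_mono (Set.image_mono (Finset.coe_subset.mpr hST)) hmem
    have hT : colRank G (insert e T) = colRank G T := by
      rw [colRank_insert_img, colRank, ← hv, ← hsT, Submodule.span_insert_eq_span hvT]
    have hS : colRank G (insert e S) = colRank G S := by
      rw [colRank_insert_img, colRank, ← hv, ← hsS, Submodule.span_insert_eq_span hmem]
    omega
  · have h1 : colRank G S + 1 ≤ colRank G (insert e S) := by
      rw [colRank_insert_img, ← hv, ← hsS]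
      have hlt : Submodule.span (ZMod 2) sS < Submodule.span (ZMod 2) (insert v sS) := by
        refine lt_of_le_of_ne (Submodule.span_mono (Set.subset_insert _ _)) ?_
        intro hEq
        exact hmem (hEq ▸ Submodule.subset_span (Set.mem_insert _ _))
      have hcr : colRank G S = Module.finrank (ZMod 2) (Submodule.span (ZMod 2) sS) := rfl
      rw [hcr]
      exact Submodule.finrank_lt_finrank_of_lt hlt
    have h2 := colRank_insert_le G T e
    omega



theorem matroid_rank_noise_bound (n k : ℕ) (G : Fin k → Fin n → ZMod 2)
    (p t : ℝ) (hp0 : 0 ≤ p) (hp1 : p ≤ 1) (ht : t = p ^ (1 / (2 * Real.log 2))) :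
    Real.logb 2
        (∑ S : Finset (Fin n),
          p ^ S.card * (1 - p) ^ (n - S.card) * 2 ^ ((S.card : ℝ) - colRank G S)) ≤
      ∑ T : Finset (Fin n),
        t ^ T.card * (1 - t) ^ (n - T.card) * ((T.card : ℝ) - colRank G T) := by
  have hmain := abstract_bound (Finset.univ : Finset (Fin n))
    (fun S => (colRank G S : ℝ))
    (by simp [colRank_empty])
    (fun S e => by exact_mod_cast colRank_mono G S e)
    (fun S e => by exact_mod_cast colRank_insert_le G S e)
    (fun S T e hST => by exact_mod_cast colRank_submodular G S T e hST)
    p t hp0 hp1 (by rw [ht]; rfl)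
  simpa using hmain
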